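/- Let T be a plane tree with n non-root nodes, let α_ℓ be the number of nodes of T at depth ℓ, and s_ℓ = α_1 + ... + α_ℓ. Define a sequence b_0, ..., b_{n-1} by: b_0 = number of children of the root, and for 1 ≤ k ≤ n−1, writing k = s_ℓ − r with 0 ≤ r < α_ℓ, b_k = number of children of the (r+1)-st node of depth ℓ (nodes of the same depth ordered left to right). Then there is a unique Dyck path of size n whose number of north steps on the line x = k equals b_k for all 0 ≤ k ≤ n−1, and the resulting map Ξ_bounce from plane trees with n non-root nodes to Dyck paths of size n is a bijection. -/

import Mathlib

/-- A Dyck word: `true` is a north step, `false` an east step. -/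
def IsDyckWord (w : List Bool) : Prop :=
  (∀ p : List Bool, p <+: w → p.count false ≤ p.count true) ∧
    w.count true = w.count false

inductive PlaneTree where
  | node : List PlaneTree → PlaneTree

namespace PlaneTree

def childrenOf : PlaneTree → List PlaneTree
  | .node cs => cs

/-- number of children of the root -/
def arityOf (t : PlaneTree) : ℕ := t.childrenOf.length

def numNodes : PlaneTree → ℕ
  | .node cs => 1 + (cs.attach.map (fun c => numNodes c.1)).sum
decreasing_by have := List.sizeOf_lt_of_mem c.2; simp only [PlaneTree.node.sizeOf_spec]; omega

mutual
  /-- Dyck word of the clockwise contour walk of a plane tree: north (`true`) on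
  the first traversal of an edge, east (`false`) on the second; children are
  visited from right to left. -/
  def steepWord : PlaneTree → List Bool
    | .node cs => steepWordAux cs
  /-- contour word of a forest (left-to-right list of trees), walked clockwise,
  i.e. rightmost tree first. -/
  def steepWordAux : List PlaneTree → List Bool
    | [] => []
    | c :: rest => steepWordAux rest ++ (true :: (steepWord c ++ [false]))
end

end PlaneTree

namespace PlaneTree

/-- list of the nodes (subtrees) of `t` at depth `ℓ`, from left to right. -/
def level : PlaneTree → ℕ → List PlaneTree
  | t, 0 => [t]
  | .node cs, (ℓ + 1) => (cs.map (fun c => level c ℓ)).flatten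

/-- all nodes of `t` listed by increasing depth and, within each depth, from
right to left (so the `(r+1)`-st node of depth `ℓ`, counted from the left,
appears in position `s_ℓ - r` where `s_ℓ = α_1 + ⋯ + α_ℓ`). -/
def bfList (t : PlaneTree) : List PlaneTree :=
  ((List.range t.numNodes).map (fun ℓ => (level t ℓ).reverse)).flatten

end PlaneTree

/-- number of north steps of the Dyck word `w` on the vertical line `x = k`,
i.e. norths preceded by exactly `k` east steps. -/
def northsAt (w : List Bool) (k : ℕ) : ℕ :=
  ((List.range w.length).filter
    (fun i => (w.getD i false) && ((w.take i).count false == k))).length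

open PlaneTree
section Bounce

def countA : List Bool → ℕ → ℕ
  | [], _ => 0
  | (true :: w), 0 => countA w 0 + 1
  | (true :: w), (k+1) => countA w (k+1)
  | (false :: _), 0 => 0
  | (false :: w), (k+1) => countA w k

lemma northsAt_true_zero (w : List Bool) : northsAt (true :: w) 0 = northsAt w 0 + 1 := by
  unfold northsAt
  rw [List.length_cons, List.range_succ_eq_map, List.filter_cons, List.filter_map]
  simp [Function.comp, List.count_cons, Nat.add_comm]
  congr 1

lemma northsAt_true_succ (w : List Bool) (k : ℕ) :
    northsAt (true :: w) (k+1) = northsAt w (k+1) := by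
  unfold northsAt
  rw [List.length_cons, List.range_succ_eq_map, List.filter_cons, List.filter_map]
  simp [Function.comp, List.count_cons]
  congr 1

lemma northsAt_false_zero (w : List Bool) : northsAt (false :: w) 0 = 0 := by
  unfold northsAt
  rw [List.length_cons, List.range_succ_eq_map, List.filter_cons, List.filter_map]
  simp [Function.comp, List.count_cons]

lemma northsAt_false_succ (w : List Bool) (k : ℕ) :
    northsAt (false :: w) (k+1) = northsAt w k := by
  unfold northsAt
  rw [List.length_cons, List.range_succ_eq_map, List.filter_cons, List.filter_map]
  simp [Function.comp, List.count_cons, Nat.add_comm]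
  congr 1
  apply List.filter_congr
  intro i _
  simp [Function.comp, List.count_cons, beq_iff_eq]

lemma northsAt_eq_countA : ∀ (w : List Bool) (k : ℕ), northsAt w k = countA w k
  | [], _ => rfl
  | (true :: w), 0 => by rw [northsAt_true_zero, northsAt_eq_countA w 0]; rfl
  | (true :: w), (k+1) => by rw [northsAt_true_succ, northsAt_eq_countA w (k+1)]; rfl
  | (false :: w), 0 => northsAt_false_zero w
  | (false :: w), (k+1) => by rw [northsAt_false_succ, northsAt_eq_countA w k]; rfl

end Bounce
section Canon

def canonWord (b : List ℕ) : List Bool :=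
  (b.map (fun a => List.replicate a true ++ [false])).flatten

@[simp] lemma canonWord_nil : canonWord [] = [] := rfl

lemma canonWord_cons (a : ℕ) (b : List ℕ) :
    canonWord (a :: b) = (List.replicate a true ++ [false]) ++ canonWord b := by
  simp [canonWord]

lemma canonWord_append (b c : List ℕ) :
    canonWord (b ++ c) = canonWord b ++ canonWord c := by
  simp [canonWord]

@[simp] lemma count_true_canonWord (b : List ℕ) : (canonWord b).count true = b.sum := by
  induction b with
  | nil => rfl
  | cons a b ih => simp [canonWord_cons, ih, List.count_append]

@[simp] lemma count_false_canonWord (b : List ℕ) : (canonWord b).count false = b.length := by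
  induction b with
  | nil => rfl
  | cons a b ih => simp [canonWord_cons, ih, List.count_append, List.count_replicate]

lemma length_canonWord (b : List ℕ) : (canonWord b).length = b.sum + b.length := by
  induction b with
  | nil => rfl
  | cons a b ih => simp [canonWord_cons, ih]; omega

lemma countA_replicate_append_zero (a : ℕ) (v : List Bool) :
    countA (List.replicate a true ++ v) 0 = a + countA v 0 := by
  induction a with
  | zero => simp [countA]
  | succ a ih => simp [List.replicate_succ, countA, ih]; omega

lemma countA_replicate_append_succ (a : ℕ) (v : List Bool) (k : ℕ) :
    countA (List.replicate a true ++ v) (k+1) = countA v (k+1) := by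
  induction a with
  | zero => simp
  | succ a ih => simpa [List.replicate_succ, countA] using ih

lemma countA_canonWord (b : List ℕ) : ∀ k, countA (canonWord b) k = b.getD k 0 := by
  induction b with
  | nil => intro k; simp [countA]
  | cons a b ih =>
    intro k
    rw [canonWord_cons, List.append_assoc]
    cases k with
    | zero =>
      rw [countA_replicate_append_zero]
      simp [countA]
    | succ k =>
      rw [countA_replicate_append_succ]
      simpa [countA] using ih k

lemma canonWord_succ_head (x : ℕ) (l : List ℕ) :
    canonWord ((x+1) :: l) = true :: canonWord (x :: l) := by
  simp [canonWord_cons, List.replicate_succ]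

/-- structure lemma: every word is its canonical decomposition -/
lemma word_structure : ∀ w : List Bool,
    w = canonWord ((List.range (w.count false)).map (countA w)) ++
        List.replicate (countA w (w.count false)) true
  | [] => by simp [countA]
  | (true :: w) => by
    have ih := word_structure w
    cases h : w.count false with
    | zero =>
      rw [show (true :: w).count false = 0 by simp [h]]
      simp only [List.range_zero, List.map_nil, canonWord_nil, List.nil_append]
      rw [show countA (true :: w) 0 = countA w 0 + 1 from rfl]
      rw [h] at ih
      simp only [List.range_zero, List.map_nil, canonWord_nil, List.nil_append] at ih
      rw [List.replicate_succ]
      exact congrArg _ ih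
    | succ m =>
      rw [show (true :: w).count false = m + 1 by simp [h]]
      have e1 : List.map (countA (true :: w)) (List.range (m+1)) =
          (countA w 0 + 1) :: List.map (countA w ∘ Nat.succ) (List.range m) := by
        rw [List.range_succ_eq_map, List.map_cons, List.map_map]
        rfl
      have e2 : List.map (countA w) (List.range (m+1)) =
          countA w 0 :: List.map (countA w ∘ Nat.succ) (List.range m) := by
        rw [List.range_succ_eq_map, List.map_cons, List.map_map]
      rw [e1, canonWord_succ_head, ← e2,
        show countA (true :: w) (m+1) = countA w (m+1) from rfl, ← h, List.cons_append]
      exact congrArg _ ih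
  | (false :: w) => by
    have ih := word_structure w
    rw [show (false :: w).count false = w.count false + 1 by simp]
    rw [List.range_succ_eq_map, List.map_cons, List.map_map]
    rw [show countA (false :: w) 0 = 0 from rfl]
    rw [show (countA (false :: w) ∘ Nat.succ) = countA w by funext i; simp [Function.comp, countA]]
    rw [show countA (false :: w) (w.count false + 1) = countA w (w.count false) from rfl]
    rw [canonWord_cons]
    simpa using congrArg (List.cons false) ih

end Canon
section Dyck

lemma count_true_add_count_false : ∀ w : List Bool, w.count true + w.count false = w.length
  | [] => rfl
  | (b :: w) => by
    have := count_true_add_count_false w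
    cases b <;> simp [List.count_cons] <;> omega

lemma prefix_append_cases {α : Type*} {p l r : List α} (h : p <+: l ++ r) :
    p <+: l ∨ ∃ q, q <+: r ∧ p = l ++ q := by
  by_cases hl : p.length ≤ l.length
  · exact Or.inl (List.prefix_of_prefix_length_le h (l.prefix_append r) hl)
  · right
    refine ⟨p.drop l.length, ?_, ?_⟩
    · obtain ⟨s, hs⟩ := h
      refine ⟨s, ?_⟩
      have := congrArg (List.drop l.length) hs
      rwa [List.drop_append_of_le_length (by omega), List.drop_left] at this
    · obtain ⟨s, hs⟩ := h
      have h2 : p.take l.length = l := by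
        have := congrArg (List.take l.length) hs
        rwa [List.take_append_of_le_length (by omega), List.take_left] at this
      conv_lhs => rw [← List.take_append_drop l.length p, h2]

lemma prefix_replicate_count {α : Type*} [BEq α] [LawfulBEq α] {p : List α} {a : α} {n : ℕ}
    (h : p <+: List.replicate n a) (b : α) (hb : b ≠ a) : p.count b = 0 := by
  have hcl := h.sublist.count_le b
  rw [List.count_replicate, if_neg (by simpa using Ne.symm hb)] at hcl
  exact Nat.le_zero.mp hcl

/-- key prefix estimate for canonical words -/
lemma canonWord_prefix_bound : ∀ (b : List ℕ) (c : ℕ),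
    (∀ m, m ≤ b.length → m ≤ c + (b.take m).sum) →
    ∀ p, p <+: canonWord b → p.count false ≤ c + p.count true
  | [], c, _, p, hp => by
    simp only [canonWord_nil, List.prefix_nil] at hp
    simp [hp]
  | (a :: b'), c, hyp, p, hp => by
    rw [canonWord_cons, List.append_assoc] at hp
    have h1 : (1 : ℕ) ≤ c + a := by simpa using hyp 1 (by simp)
    rcases prefix_append_cases hp with h | ⟨q, hq, rfl⟩
    · have := prefix_replicate_count h false (by simp)
      simp [this]
    · rcases hq with ⟨s, hs⟩
      cases q with
      | nil => simp [List.count_replicate]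
      | cons x q' =>
        rw [List.cons_append] at hs
        injection hs with hx hs'
        subst hx
        have hq' : q' <+: canonWord b' := ⟨s, hs'⟩
        have ihyp : ∀ m, m ≤ b'.length → m ≤ (c + a - 1) + (b'.take m).sum := by
          intro m hm
          have := hyp (m+1) (by simp; omega)
          rw [List.take_succ_cons] at this
          simp only [List.sum_cons] at this
          omega
        have := canonWord_prefix_bound b' (c + a - 1) ihyp q' hq'
        simp only [List.count_append, List.count_cons, List.count_replicate]
        simp
        omega

lemma isDyckWord_canonWord (b : List ℕ) (hs : b.sum = b.length)
    (hyp : ∀ m, m ≤ b.length → m ≤ (b.take m).sum) : IsDyckWord (canonWord b) := by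
  constructor
  · intro p hp
    simpa using canonWord_prefix_bound b 0 (by simpa using hyp) p hp
  · simp [hs]

lemma dyck_eq_canonWord {w : List Bool} (h : IsDyckWord w) :
    w = canonWord ((List.range (w.count false)).map (countA w)) := by
  have hst := word_structure w
  set A := canonWord ((List.range (w.count false)).map (countA w)) with hA
  have hpre : A <+: w := by rw [hst]; exact ⟨_, rfl⟩
  have h1 := h.1 A hpre
  have hfA : A.count false = w.count false := by simp [hA]
  have hfw : w.count false = A.count false + 0 := by simp [hfA]
  have htw : w.count true = A.count true + countA w (w.count false) := by
    conv_lhs => rw [hst]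
    simp [List.count_append, List.count_replicate]
  have hz : countA w (w.count false) = 0 := by
    have := h.2
    omega
  rw [hst, hz]
  simp

end Dyck
section Forest
open PlaneTree

def rch (t : PlaneTree) : List PlaneTree := t.childrenOf.reverse

def stepF (f : List PlaneTree) : List PlaneTree := f.flatMap rch

def Fr : ℕ → List PlaneTree → List PlaneTree
  | 0, f => f
  | (ℓ+1), f => Fr ℓ (stepF f)

def bfF (f : List PlaneTree) (K : ℕ) : List PlaneTree :=
  ((List.range K).map (fun ℓ => Fr ℓ f)).flatten

def sN (f : List PlaneTree) : ℕ := (f.map numNodes).sum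

@[simp] lemma stepF_nil : stepF [] = [] := rfl

@[simp] lemma stepF_cons (t : PlaneTree) (f : List PlaneTree) :
    stepF (t :: f) = rch t ++ stepF f := rfl

@[simp] lemma Fr_nil : ∀ ℓ, Fr ℓ [] = []
  | 0 => rfl
  | (ℓ+1) => Fr_nil ℓ

@[simp] lemma bfF_zero (f : List PlaneTree) : bfF f 0 = [] := rfl

lemma bfF_succ (f : List PlaneTree) (K : ℕ) :
    bfF f (K+1) = f ++ bfF (stepF f) K := by
  unfold bfF
  rw [List.range_succ_eq_map, List.map_cons, List.map_map, List.flatten_cons]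
  rfl

@[simp] lemma bfF_nil : ∀ K, bfF [] K = []
  | 0 => rfl
  | (K+1) => by rw [bfF_succ, stepF_nil, bfF_nil K]; rfl

lemma numNodes_node (cs : List PlaneTree) :
    numNodes (PlaneTree.node cs) = 1 + (cs.map numNodes).sum := by
  rw [numNodes]
  congr 1
  rw [List.attach_map_val (l := cs) (f := numNodes)]

lemma one_le_numNodes (t : PlaneTree) : 1 ≤ numNodes t := by
  cases t with
  | node cs => rw [numNodes_node]; omega

@[simp] lemma sN_nil : sN [] = 0 := rfl

@[simp] lemma sN_cons (t : PlaneTree) (f : List PlaneTree) :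
    sN (t :: f) = numNodes t + sN f := by simp [sN]

lemma sN_append (f g : List PlaneTree) : sN (f ++ g) = sN f + sN g := by
  simp [sN]

lemma sN_eq_zero {f : List PlaneTree} (h : sN f = 0) : f = [] := by
  cases f with
  | nil => rfl
  | cons t f => have := one_le_numNodes t; simp at h; omega

lemma sN_reverse (f : List PlaneTree) : sN f.reverse = sN f := by
  simp [sN, List.sum_reverse]

lemma sN_rch (t : PlaneTree) : sN (rch t) + 1 = numNodes t := by
  cases t with
  | node cs => rw [rch, sN_reverse, numNodes_node]; simp [sN, childrenOf]; omega

lemma sN_stepF (f : List PlaneTree) : sN (stepF f) + f.length = sN f := by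
  induction f with
  | nil => rfl
  | cons t f ih =>
    rw [stepF_cons, sN_append, sN_cons, List.length_cons]
    have := sN_rch t
    omega

lemma length_stepF (f : List PlaneTree) : (stepF f).length = (f.map arityOf).sum := by
  induction f with
  | nil => rfl
  | cons t f ih =>
    rw [stepF_cons, List.length_append, ih, List.map_cons, List.sum_cons]
    congr 1
    simp [rch, arityOf]

/-- inverse layer builder -/
def buildLayer : List ℕ → List PlaneTree → List PlaneTree
  | [], _ => []
  | (a :: c), g => PlaneTree.node (g.take a).reverse :: buildLayer c (g.drop a)

def psi : ℕ → ℕ → List ℕ → List PlaneTree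
  | 0, _, _ => []
  | (K+1), m, b => buildLayer (b.take m) (psi K (b.take m).sum (b.drop m))

@[simp] lemma buildLayer_nil (g : List PlaneTree) : buildLayer [] g = [] := rfl

lemma length_buildLayer : ∀ (c : List ℕ) (g : List PlaneTree),
    (buildLayer c g).length = c.length
  | [], _ => rfl
  | (a :: c), g => by
    rw [buildLayer, List.length_cons, length_buildLayer c]
    rfl

lemma stepF_buildLayer : ∀ (c : List ℕ) (g : List PlaneTree), c.sum = g.length →
    stepF (buildLayer c g) = g
  | [], g, h => by
    simp only [List.sum_nil] at h
    rw [buildLayer, stepF_nil]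
    exact (List.eq_nil_of_length_eq_zero h.symm).symm
  | (a :: c), g, h => by
    simp only [List.sum_cons] at h
    have ha : a ≤ g.length := by omega
    rw [buildLayer, stepF_cons, rch]
    rw [show childrenOf (PlaneTree.node (g.take a).reverse) = (g.take a).reverse from rfl]
    rw [List.reverse_reverse]
    rw [stepF_buildLayer c (g.drop a) (by rw [List.length_drop]; omega)]
    exact List.take_append_drop a g

lemma arity_buildLayer : ∀ (c : List ℕ) (g : List PlaneTree), c.sum = g.length →
    (buildLayer c g).map arityOf = c
  | [], g, _ => rfl
  | (a :: c), g, h => by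
    simp only [List.sum_cons] at h
    have ha : a ≤ g.length := by omega
    rw [buildLayer, List.map_cons, arity_buildLayer c (g.drop a) (by rw [List.length_drop]; omega)]
    congr 1
    simp [arityOf, childrenOf, List.length_take]
    omega

lemma sN_buildLayer : ∀ (c : List ℕ) (g : List PlaneTree), c.sum = g.length →
    sN (buildLayer c g) = c.length + sN g
  | [], g, h => by
    simp only [List.sum_nil] at h
    rw [(List.eq_nil_of_length_eq_zero h.symm : g = [])]
    rfl
  | (a :: c), g, h => by
    simp only [List.sum_cons] at h
    have ha : a ≤ g.length := by omega
    rw [buildLayer, sN_cons, sN_buildLayer c (g.drop a) (by rw [List.length_drop]; omega),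
      numNodes_node]
    have : sN ((g.take a).reverse) + sN (g.drop a) = sN g := by
      rw [sN_reverse]
      conv_rhs => rw [← List.take_append_drop a g]
      rw [sN_append]
    simp only [List.length_cons, sN]
    simp only [sN] at this ⊢
    omega

lemma buildLayer_arity_stepF : ∀ f : List PlaneTree,
    buildLayer (f.map arityOf) (stepF f) = f
  | [] => rfl
  | (t :: f) => by
    rw [List.map_cons, stepF_cons, buildLayer]
    have hl : arityOf t = (rch t).length := by simp [rch, arityOf]
    rw [List.take_left' hl.symm, List.drop_left' hl.symm, buildLayer_arity_stepF f]
    congr 1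
    cases t with
    | node cs => simp [rch, childrenOf]

end Forest
section Main
open PlaneTree

lemma main_fwd : ∀ (N : ℕ) (f : List PlaneTree) (K : ℕ), sN f = N → N ≤ K →
    ((bfF f K).map arityOf).length = N ∧
    ((bfF f K).map arityOf).sum + f.length = N ∧
    ∀ j < N, j + 1 ≤ f.length + (((bfF f K).map arityOf).take j).sum := by
  intro N
  induction N using Nat.strong_induction_on with
  | _ N ih =>
    intro f K hsN hK
    rcases Nat.eq_zero_or_pos N with rfl | hN
    · obtain rfl := sN_eq_zero hsN
      simp
    · have hf : f ≠ [] := by rintro rfl; simp [sN] at hsN; omega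
      have hm : 1 ≤ f.length := by
        cases f with
        | nil => exact absurd rfl hf
        | cons t f => simp
      obtain ⟨K', rfl⟩ : ∃ K', K = K' + 1 := ⟨K - 1, by omega⟩
      rw [bfF_succ]
      set m := f.length with hmm
      have hms : m ≤ N := by
        have h1 : m ≤ sN f := by
          rw [hmm, sN]
          calc f.length = (f.map numNodes).length := (List.length_map numNodes).symm
          _ ≤ (f.map numNodes).sum := List.length_le_sum_of_one_le _ (by
              intro x hx
              obtain ⟨t, _, rfl⟩ := List.mem_map.mp hx
              exact one_le_numNodes t)
        omega
      have hstep : sN (stepF f) = N - m := by have := sN_stepF f; omega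
      have hlt : N - m < N := by omega
      obtain ⟨ihl, ihs, ihp⟩ := ih (N - m) hlt (stepF f) K' hstep (by omega)
      have harf : (f.map arityOf).sum = (stepF f).length := (length_stepF f).symm
      refine ⟨?_, ?_, ?_⟩
      · rw [List.map_append, List.length_append, List.length_map, ihl]
        have := sN_stepF f
        omega
      · rw [List.map_append, List.sum_append]
        omega
      · intro j hj
        rw [List.map_append]
        by_cases hjm : j < m
        · omega
        · push_neg at hjm
          obtain ⟨j', rfl⟩ : ∃ j', j = m + j' := ⟨j - m, by omega⟩
          have hlenf : (f.map arityOf).length = m := List.length_map arityOf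
          rw [← hlenf, List.take_append, List.sum_append, hlenf, Nat.add_sub_cancel_left,
            List.take_of_length_le (by omega : (f.map arityOf).length ≤ m + j')]
          have hp := ihp j' (by omega)
          omega

end Main
section Psi
open PlaneTree

lemma psi_spec : ∀ (N : ℕ) (b : List ℕ) (m : ℕ),
    b.length = N → b.sum + m = N → (∀ j < N, j + 1 ≤ m + (b.take j).sum) →
    ∀ K, N ≤ K →
    sN (psi K m b) = N ∧ (psi K m b).length = m ∧
      ∀ K', N ≤ K' → (bfF (psi K m b) K').map arityOf = b := by
  intro N
  induction N using Nat.strong_induction_on with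
  | _ N ih =>
    intro b m hlen hsum hcond K hK
    rcases Nat.eq_zero_or_pos N with rfl | hN
    · obtain rfl : b = [] := List.eq_nil_of_length_eq_zero hlen
      obtain rfl : m = 0 := by omega
      have hpsi : psi K 0 [] = [] := by
        cases K with
        | zero => rfl
        | succ K => rw [psi]; rfl
      rw [hpsi]
      exact ⟨rfl, rfl, fun K' _ => by simp⟩
    · have hm : 1 ≤ m := by
        have := hcond 0 hN
        simpa using this
      have hmN : m ≤ N := by omega
      obtain ⟨K0, rfl⟩ : ∃ K0, K = K0 + 1 := ⟨K - 1, by omega⟩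
      rw [psi]
      set c := b.take m with hc
      set b' := b.drop m with hb'
      have hcb : b = c ++ b' := (List.take_append_drop m b).symm
      have hclen : c.length = m := by rw [hc, List.length_take]; omega
      have hblen : b'.length = N - m := by rw [hb', List.length_drop]; omega
      have hsum' : b'.sum + c.sum = N - m := by
        have : c.sum + b'.sum = b.sum := by rw [hcb, List.sum_append]
        omega
      have hcond' : ∀ j < N - m, j + 1 ≤ c.sum + (b'.take j).sum := by
        intro j hj
        have := hcond (m + j) (by omega)
        rw [hcb, ← hclen, List.take_append, List.sum_append, hclen, Nat.add_sub_cancel_left,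
          List.take_of_length_le (by omega : c.length ≤ m + j)] at this
        omega
      obtain ⟨ihsN, ihlen, ihbf⟩ := ih (N - m) (by omega) b' c.sum hblen (by omega) hcond' K0 (by omega)
      have hgl : c.sum = (psi K0 c.sum b').length := ihlen.symm
      refine ⟨?_, ?_, ?_⟩
      · rw [sN_buildLayer c _ hgl, ihsN, hclen]; omega
      · rw [length_buildLayer, hclen]
      · intro K' hK'
        obtain ⟨K1, rfl⟩ : ∃ K1, K' = K1 + 1 := ⟨K' - 1, by omega⟩
        rw [bfF_succ, stepF_buildLayer c _ hgl, List.map_append, arity_buildLayer c _ hgl,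
          ihbf K1 (by omega), hcb]

lemma psi_phi : ∀ (N : ℕ) (f : List PlaneTree) (K K' : ℕ), sN f = N → N ≤ K → N ≤ K' →
    psi K f.length ((bfF f K').map arityOf) = f := by
  intro N
  induction N using Nat.strong_induction_on with
  | _ N ih =>
    intro f K K' hsN hK hK'
    rcases Nat.eq_zero_or_pos N with rfl | hN
    · obtain rfl := sN_eq_zero hsN
      cases K with
      | zero => rfl
      | succ K => simp [psi]
    · have hf1 : 1 ≤ f.length := by
        cases f with
        | nil => simp [sN] at hsN; omega
        | cons t f => simp
      have hmN : f.length ≤ N := by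
        have h1 : f.length ≤ sN f := by
          rw [sN]
          calc f.length = (f.map numNodes).length := (List.length_map numNodes).symm
          _ ≤ (f.map numNodes).sum := List.length_le_sum_of_one_le _ (by
              intro x hx
              obtain ⟨t, _, rfl⟩ := List.mem_map.mp hx
              exact one_le_numNodes t)
        omega
      obtain ⟨K0, rfl⟩ : ∃ K0, K = K0 + 1 := ⟨K - 1, by omega⟩
      obtain ⟨K1, rfl⟩ : ∃ K1, K' = K1 + 1 := ⟨K' - 1, by omega⟩
      rw [bfF_succ, List.map_append, psi]
      have hlf : (f.map arityOf).length = f.length := List.length_map arityOf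
      rw [List.take_left' hlf, List.drop_left' hlf]
      have hsum : (f.map arityOf).sum = (stepF f).length := (length_stepF f).symm
      rw [hsum]
      have hstep : sN (stepF f) = N - f.length := by have := sN_stepF f; omega
      rw [ih (N - f.length) (by omega) (stepF f) K0 K1 hstep (by omega) (by omega)]
      exact buildLayer_arity_stepF f

end Psi
section Levels
open PlaneTree

lemma flatMap_level_succ : ∀ (g : List PlaneTree) (ℓ : ℕ),
    g.flatMap (fun t => level t (ℓ+1)) = (g.flatMap childrenOf).flatMap (fun t => level t ℓ)
  | [], _ => rfl
  | (PlaneTree.node cs :: g), ℓ => by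
    rw [List.flatMap_cons, List.flatMap_cons, List.flatMap_append, flatMap_level_succ g ℓ]
    have h3 : level (PlaneTree.node cs) (ℓ+1) =
        (childrenOf (PlaneTree.node cs)).flatMap (fun t => level t ℓ) := by
      rw [show childrenOf (PlaneTree.node cs) = cs from rfl, List.flatMap_def]
      rfl
    rw [h3]

lemma level_rev : ∀ (ℓ : ℕ) (g : List PlaneTree),
    (g.flatMap (fun t => level t ℓ)).reverse = Fr ℓ g.reverse
  | 0, g => by
    simp [level, Fr]
  | (ℓ+1), g => by
    rw [flatMap_level_succ, level_rev ℓ (g.flatMap childrenOf)]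
    have h2 : (g.flatMap childrenOf).reverse = stepF g.reverse := by
      rw [List.reverse_flatMap]; rfl
    rw [h2]
    rfl

lemma bfList_eq_bfF (t : PlaneTree) : bfList t = bfF [t] (numNodes t) := by
  rw [bfList, bfF]
  congr 1
  apply List.map_congr_left
  intro ℓ _
  have := level_rev ℓ [t]
  simp only [List.flatMap_cons, List.flatMap_nil, List.append_nil,
    List.reverse_singleton] at this
  exact this

end Levels
section Assembly
open PlaneTree

lemma getD_map_arity (l : List PlaneTree) {k : ℕ} (hk : k < l.length) :
    (l.map arityOf).getD k 0 = arityOf (l.getD k (.node [])) := by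
  rw [List.getD_eq_getElem _ _ (by simpa using hk), List.getD_eq_getElem _ _ hk,
    List.getElem_map]

lemma getD_take (l : List ℕ) {k n : ℕ} (hk : k < n) :
    (l.take n).getD k 0 = l.getD k 0 := by
  rw [List.getD_eq_getElem?_getD, List.getD_eq_getElem?_getD, List.getElem?_take, if_pos hk]

lemma map_getD_range (l : List ℕ) :
    (List.range l.length).map (fun k => l.getD k 0) = l := by
  apply List.ext_getElem (by simp)
  intro i h1 h2
  simp only [List.getElem_map, List.getElem_range]
  rw [List.getD_eq_getElem _ _ h2]

/-- the bounce word of a tree -/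
def XiB (n : ℕ) (t : PlaneTree) : List Bool :=
  canonWord (((bfList t).map arityOf).take n)

lemma count_false_of_dyck {w : List Bool} {n : ℕ} (hw : IsDyckWord w) (hl : w.length = 2*n) :
    w.count false = n ∧ w.count true = n := by
  have := count_true_add_count_false w
  have := hw.2
  omega

lemma dyck_unique {n : ℕ} {w w' : List Bool} (hw : IsDyckWord w) (hl : w.length = 2*n)
    (hw' : IsDyckWord w') (hl' : w'.length = 2*n)
    (hsame : ∀ k < n, countA w k = countA w' k) : w = w' := by
  have hc := (count_false_of_dyck hw hl).1
  have hc' := (count_false_of_dyck hw' hl').1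
  rw [dyck_eq_canonWord hw, dyck_eq_canonWord hw', hc, hc']
  congr 1
  apply List.map_congr_left
  intro k hk
  exact hsame k (List.mem_range.mp hk)

lemma tree_B (n : ℕ) (t : PlaneTree) (h : numNodes t = n+1) :
    ((bfList t).map arityOf).length = n + 1 ∧
    (bfList t).map arityOf = ((bfList t).map arityOf).take n ++ [0] ∧
    (((bfList t).map arityOf).take n).sum = n ∧
    (∀ m ≤ n, m ≤ ((((bfList t).map arityOf).take n).take m).sum) := by
  have hs : sN [t] = n + 1 := by simp [sN, h]
  have hb : bfList t = bfF [t] (n+1) := by rw [bfList_eq_bfF, h]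
  obtain ⟨h1, h2, h3⟩ := main_fwd (n+1) [t] (n+1) hs le_rfl
  rw [← hb] at h1 h2 h3
  set Φ := (bfList t).map arityOf with hΦdef
  have hlen : Φ.length = n + 1 := h1
  have hsum : Φ.sum = n := by
    simp only [List.length_singleton] at h2
    omega
  have h3' : ∀ j < n+1, j + 1 ≤ 1 + (Φ.take j).sum := by
    intro j hj
    simpa using h3 j hj
  have hsplit : (Φ.take n).sum + (Φ.drop n).sum = n := by
    rw [← List.sum_append, List.take_append_drop, hsum]
  have hge : n ≤ (Φ.take n).sum := by
    have := h3' n (by omega)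
    omega
  have hts : (Φ.take n).sum = n := by omega
  have hds : (Φ.drop n).sum = 0 := by omega
  have hdl : (Φ.drop n).length = 1 := by rw [List.length_drop, hlen]; omega
  have hd0 : Φ.drop n = [0] := by
    cases hc : Φ.drop n with
    | nil => rw [hc] at hdl; simp at hdl
    | cons x l =>
      rw [hc] at hdl hds
      simp only [List.length_cons, List.sum_cons] at hdl hds
      obtain rfl : l = [] := List.eq_nil_of_length_eq_zero (by omega)
      simp only [List.sum_nil] at hds
      obtain rfl : x = 0 := by omega
      rfl
  refine ⟨hlen, ?_, hts, ?_⟩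
  · conv_lhs => rw [← List.take_append_drop n Φ, hd0]
  · intro m hm
    rw [List.take_take, min_eq_left hm]
    rcases Nat.eq_zero_or_pos m with rfl | hm0
    · omega
    · have := h3' m (by omega)
      omega

lemma XiB_spec (n : ℕ) (t : PlaneTree) (h : numNodes t = n+1) :
    IsDyckWord (XiB n t) ∧ (XiB n t).length = 2 * n ∧
      ∀ k < n, northsAt (XiB n t) k = arityOf ((bfList t).getD k (.node [])) := by
  obtain ⟨hlen, _, hts, hcond⟩ := tree_B n t h
  set Φ := (bfList t).map arityOf with hΦdef
  have hBlen : (Φ.take n).length = n := by rw [List.length_take, hlen]; omega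
  refine ⟨?_, ?_, ?_⟩
  · apply isDyckWord_canonWord _ (by rw [hts, hBlen])
    intro m hm
    rw [hBlen] at hm
    exact hcond m hm
  · rw [XiB, length_canonWord, hts, hBlen]; omega
  · intro k hk
    rw [XiB, northsAt_eq_countA, countA_canonWord, getD_take Φ hk,
      getD_map_arity _ (by have := hlen; rw [hΦdef, List.length_map] at this; omega)]

theorem bounce_bijection' (n : ℕ) :
    (∀ t : PlaneTree, numNodes t = n + 1 →
      ∃! w : List Bool, IsDyckWord w ∧ w.length = 2 * n ∧
        ∀ k < n, northsAt w k = arityOf ((bfList t).getD k (.node []))) ∧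
    ∃ Ξ : PlaneTree → List Bool,
      (∀ t : PlaneTree, numNodes t = n + 1 →
        IsDyckWord (Ξ t) ∧ (Ξ t).length = 2 * n ∧
          ∀ k < n, northsAt (Ξ t) k = arityOf ((bfList t).getD k (.node []))) ∧
      Set.BijOn Ξ {t : PlaneTree | numNodes t = n + 1}
        {w : List Bool | IsDyckWord w ∧ w.length = 2 * n} := by
  have huniq : ∀ (t : PlaneTree), numNodes t = n + 1 → ∀ w : List Bool,
      (IsDyckWord w ∧ w.length = 2 * n ∧
        ∀ k < n, northsAt w k = arityOf ((bfList t).getD k (.node []))) → w = XiB n t := by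
    intro t ht w ⟨hw, hwl, hwn⟩
    obtain ⟨hd, hl, hn⟩ := XiB_spec n t ht
    apply dyck_unique hw hwl hd hl
    intro k hk
    rw [← northsAt_eq_countA, ← northsAt_eq_countA, hwn k hk, hn k hk]
  constructor
  · intro t ht
    obtain ⟨hd, hl, hn⟩ := XiB_spec n t ht
    exact ⟨XiB n t, ⟨hd, hl, hn⟩, huniq t ht⟩
  · refine ⟨XiB n, fun t ht => XiB_spec n t ht, ?_, ?_, ?_⟩
    · intro t ht
      obtain ⟨hd, hl, _⟩ := XiB_spec n t ht
      exact ⟨hd, hl⟩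
    · -- injectivity
      intro t1 h1 t2 h2 he
      simp only [Set.mem_setOf_eq] at h1 h2
      obtain ⟨hlen1, hsplit1, _, _⟩ := tree_B n t1 h1
      obtain ⟨hlen2, hsplit2, _, _⟩ := tree_B n t2 h2
      set Φ1 := (bfList t1).map arityOf with hΦ1def
      set Φ2 := (bfList t2).map arityOf with hΦ2def
      have hBlen1 : (Φ1.take n).length = n := by rw [List.length_take, hlen1]; omega
      have hBlen2 : (Φ2.take n).length = n := by rw [List.length_take, hlen2]; omega
      have hB : Φ1.take n = Φ2.take n := by
        have hA : ∀ k, (Φ1.take n).getD k 0 = (Φ2.take n).getD k 0 := by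
          intro k
          rw [← countA_canonWord (Φ1.take n) k, ← countA_canonWord (Φ2.take n) k]
          exact congrFun (congrArg countA he) k
        rw [← map_getD_range (Φ1.take n), ← map_getD_range (Φ2.take n), hBlen1, hBlen2]
        exact List.map_congr_left (fun k _ => hA k)
      have hΦ : Φ1 = Φ2 := by rw [hsplit1, hsplit2, hB]
      have hps1 : psi (n+1) 1 ((bfF [t1] (n+1)).map arityOf) = [t1] := by
        have h0 := psi_phi (n+1) [t1] (n+1) (n+1) (by simp [sN, h1]) le_rfl le_rfl
        simpa using h0
      have hps2 : psi (n+1) 1 ((bfF [t2] (n+1)).map arityOf) = [t2] := by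
        have h0 := psi_phi (n+1) [t2] (n+1) (n+1) (by simp [sN, h2]) le_rfl le_rfl
        simpa using h0
      have e1 : Φ1 = (bfF [t1] (n+1)).map arityOf := by rw [hΦ1def, bfList_eq_bfF, h1]
      have e2 : Φ2 = (bfF [t2] (n+1)).map arityOf := by rw [hΦ2def, bfList_eq_bfF, h2]
      have hss : [t1] = [t2] := by rw [← hps1, ← hps2, ← e1, ← e2, hΦ]
      exact List.singleton_injective hss
    · -- surjectivity
      intro w hw
      obtain ⟨hwd, hwl⟩ := hw
      obtain ⟨hcf, hct⟩ := count_false_of_dyck hwd hwl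
      set b := (List.range n).map (countA w) with hbdef
      have hwc : w = canonWord b := by
        rw [dyck_eq_canonWord hwd, hcf]
      have hblen : b.length = n := by simp [hbdef]
      have hbsum : b.sum = n := by
        have := count_true_canonWord b
        rw [← hwc, hct] at this
        omega
      have hbcond : ∀ m ≤ n, m ≤ (b.take m).sum := by
        intro m hm
        have hpre : canonWord (b.take m) <+: canonWord b := by
          conv_rhs => rw [← List.take_append_drop m b]
          rw [canonWord_append]
          exact ⟨_, rfl⟩
        have := hwd.1 (canonWord (b.take m)) (by rw [hwc]; exact hpre)
        rw [count_false_canonWord, count_true_canonWord, List.length_take, hblen] at this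
        omega
      -- extended sequence
      set b' := b ++ [0] with hb'def
      have hb'len : b'.length = n + 1 := by simp [hb'def, hblen]
      have hb'sum : b'.sum + 1 = n + 1 := by simp [hb'def, hbsum]
      have hb'cond : ∀ j < n + 1, j + 1 ≤ 1 + (b'.take j).sum := by
        intro j hj
        rcases Nat.eq_zero_or_pos j with rfl | hj0
        · omega
        · have hjb : j ≤ n := by omega
          have : b'.take j = b.take j := by
            rw [hb'def, List.take_append_of_le_length (by omega)]
          rw [this]
          have := hbcond j hjb
          omega
      obtain ⟨hsN, hlen1, hbf⟩ := psi_spec (n+1) b' 1 hb'len hb'sum hb'cond (n+1) le_rfl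
      obtain ⟨t, ht⟩ : ∃ t, psi (n+1) 1 b' = [t] := by
        cases hc : psi (n+1) 1 b' with
        | nil => rw [hc] at hlen1; simp at hlen1
        | cons t l =>
          rw [hc] at hlen1
          simp only [List.length_cons] at hlen1
          obtain rfl : l = [] := List.eq_nil_of_length_eq_zero (by omega)
          exact ⟨t, rfl⟩
      have hnum : numNodes t = n + 1 := by
        rw [ht] at hsN
        simpa [sN] using hsN
      refine ⟨t, hnum, ?_⟩
      have harr : (bfList t).map arityOf = b' := by
        rw [bfList_eq_bfF, hnum, ← ht]
        exact hbf (n+1) le_rfl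
      rw [XiB, harr, hb'def, List.take_left' hblen, ← hwc]

end Assembly

/-- **`Ξ_bounce` is well-defined and a bijection.** For a plane tree `T` with
`n` non-root nodes, let `b_k` be the number of children of the `k`-th node of
`T` in the order of increasing depth (within a depth, as prescribed by
`k = s_ℓ - r`, the node being the `(r+1)`-st of depth `ℓ` from the left).
There is a unique Dyck path of size `n` having exactly `b_k` north steps on
`x = k` for all `0 ≤ k ≤ n-1`, and the resulting map from plane trees with `n`
non-root nodes to Dyck paths of size `n` is a bijection. -/
theorem bounce_bijection (n : ℕ) :
    (∀ t : PlaneTree, numNodes t = n + 1 →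
      ∃! w : List Bool, IsDyckWord w ∧ w.length = 2 * n ∧
        ∀ k < n, northsAt w k = arityOf ((bfList t).getD k (.node []))) ∧
    ∃ Ξ : PlaneTree → List Bool,
      (∀ t : PlaneTree, numNodes t = n + 1 →
        IsDyckWord (Ξ t) ∧ (Ξ t).length = 2 * n ∧
          ∀ k < n, northsAt (Ξ t) k = arityOf ((bfList t).getD k (.node []))) ∧
      Set.BijOn Ξ {t : PlaneTree | numNodes t = n + 1}
        {w : List Bool | IsDyckWord w ∧ w.length = 2 * n} := by
  exact bounce_bijection' n
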